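/- Let C be a generalized Tambara-Yamagami fusion category with group of invertible objects G(C) and let N ≤ G(C) be the common stabilizer of the non-invertible simple objects under tensoring by invertibles. Then every non-invertible simple object has Frobenius-Perron dimension √|N|, the rank of C is [G(C):N]·(1+|N|), and FPdim(C) = 2|G(C)|. -/

import Mathlib

/-!
A Grothendieck-ring (fusion ring) level formalization of fusion categories.
`Fin n` indexes the isomorphism classes of simple objects, `N i j k` is the
multiplicity of the simple `k` in the tensor product `i ⊗ j`, `dim` records the
Frobenius–Perron dimensions of the simple objects.
-/

/-- The Grothendieck-ring data of a fusion category. -/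
structure FusionData where
  n : ℕ
  npos : 0 < n
  one : Fin n
  dual : Fin n → Fin n
  N : Fin n → Fin n → Fin n → ℕ
  dim : Fin n → ℝ
  dim_ge_one : ∀ i, 1 ≤ dim i
  dim_one : dim one = 1
  dim_dual : ∀ i, dim (dual i) = dim i
  dim_mul : ∀ i j, dim i * dim j = ∑ k, (N i j k : ℝ) * dim k
  N_one_left : ∀ i k, N one i k = if k = i then 1 else 0
  N_one_right : ∀ i k, N i one k = if k = i then 1 else 0
  N_dual : ∀ i j, N i j one = if j = dual i then 1 else 0
  dual_dual : ∀ i, dual (dual i) = i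
  N_assoc : ∀ i j k l, ∑ m, N i j m * N m k l = ∑ m, N j k m * N i m l

namespace FusionData

/-- The index type of (iso classes of) simple objects. -/
abbrev I (C : FusionData) : Type := Fin C.n

/-- A simple object is invertible iff its FP dimension is `1`. -/
def Invertible (C : FusionData) (i : C.I) : Prop := C.dim i = 1

/-- A fusion category is pointed if all its simple objects are invertible. -/
def Pointed (C : FusionData) : Prop := ∀ i : C.I, C.dim i = 1

/-- The Frobenius–Perron dimension of the category. -/
noncomputable def FPdim (C : FusionData) : ℝ := ∑ i : C.I, C.dim i ^ 2

open Classical in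
/-- The FP dimension of the full subcategory spanned by a set of simples. -/
noncomputable def FPdimSet (C : FusionData) (S : Set C.I) : ℝ :=
  ∑ i : C.I, if i ∈ S then C.dim i ^ 2 else 0

open Classical in
/-- The number of iso classes of invertible objects, i.e. the order of `G(C)`. -/
noncomputable def numInv (C : FusionData) : ℕ :=
  (Finset.univ.filter fun i : C.I => C.dim i = 1).card

/-- A fusion subcategory: a set of simples containing the unit and closed under
duals and under taking simple constituents of tensor products. -/
structure Sub (C : FusionData) where
  carrier : Set C.I
  one_mem : C.one ∈ carrier
  dual_mem : ∀ i ∈ carrier, C.dual i ∈ carrier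
  mul_mem : ∀ i ∈ carrier, ∀ j ∈ carrier, ∀ k, 0 < C.N i j k → k ∈ carrier

/-- The simples of the fusion subcategory generated by a set `S` of simples. -/
inductive gen (C : FusionData) (S : Set C.I) : C.I → Prop
  | base {i} : i ∈ S → gen C S i
  | one : gen C S C.one
  | dual {i} : gen C S i → gen C S (C.dual i)
  | mul {i j k} : gen C S i → gen C S j → 0 < C.N i j k → gen C S k

/-- Simple constituents of the objects `X ⊗ X⋆`, `X` simple. -/
def adjointGenerators (C : FusionData) : Set C.I := {k | ∃ i, 0 < C.N i (C.dual i) k}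

/-- The set of simple objects of the adjoint subcategory `C_ad`. -/
def adSet (C : FusionData) : Set C.I := {k | C.gen C.adjointGenerators k}

/-- The set of simples of `C_pt`, the largest pointed fusion subcategory. -/
def ptSet (C : FusionData) : Set C.I := {i | C.dim i = 1}

/-- The ring-level shadow of a braiding: the Grothendieck ring of a braided
fusion category is commutative. -/
def Braided (C : FusionData) : Prop := ∀ i j k, C.N i j k = C.N j i k

/-- Integrality: every simple object has integer FP dimension. -/
def Integral (C : FusionData) : Prop := ∀ i : C.I, ∃ m : ℕ, C.dim i = (m : ℝ)

/-- Generalized Tambara–Yamagami: non-pointed, and the tensor product of any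
two non-invertible simples is a direct sum of invertibles. -/
def GeneralizedTY (C : FusionData) : Prop :=
  ¬ C.Pointed ∧ ∀ i j : C.I, C.dim i ≠ 1 → C.dim j ≠ 1 →
    ∀ k, 0 < C.N i j k → C.dim k = 1

/-- A grading of `C` by a group `G`. -/
structure Grading (C : FusionData) (G : Type*) [Group G] where
  deg : C.I → G
  deg_one : deg C.one = 1
  deg_mul : ∀ i j k, 0 < C.N i j k → deg k = deg i * deg j
  deg_dual : ∀ i, deg (C.dual i) = (deg i)⁻¹

/-- A grading is faithful if every component is nonzero, equivalently the
degree map is surjective. -/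
def Grading.Faithful {C : FusionData} {G : Type*} [Group G] (g : C.Grading G) : Prop :=
  Function.Surjective g.deg

/-- A `ℤ_q`-extension of a pointed fusion category: a faithful `ℤ_q`-grading
whose trivial component is pointed. -/
structure ZqExtension (C : FusionData) (q : ℕ) where
  grading : C.Grading (Multiplicative (ZMod q))
  faithful : Function.Surjective grading.deg
  trivial_pointed : ∀ i, grading.deg i = 1 → C.dim i = 1

/-- `C` is tensor equivalent to the Deligne product `B ⊠ E`. -/
def IsDeligneProd (C B E : FusionData) : Prop :=
  ∃ e : C.I ≃ B.I × E.I,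
    e C.one = (B.one, E.one) ∧
    (∀ i, e (C.dual i) = (B.dual (e i).1, E.dual (e i).2)) ∧
    (∀ i j k, C.N i j k = B.N (e i).1 (e j).1 (e k).1 * E.N (e i).2 (e j).2 (e k).2) ∧
    (∀ i, C.dim i = B.dim (e i).1 * E.dim (e i).2)

/-- `C` is tensor equivalent to the Deligne product of the finite family `F`. -/
def IsDelignePi (C : FusionData) {t : ℕ} (F : Fin t → FusionData) : Prop :=
  ∃ e : C.I ≃ ∀ s, (F s).I,
    (e C.one = fun s => (F s).one) ∧
    (∀ i s, e (C.dual i) s = (F s).dual (e i s)) ∧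
    (∀ i j k, C.N i j k = ∏ s, (F s).N (e i s) (e j s) (e k s)) ∧
    (∀ i, C.dim i = ∏ s, (F s).dim (e i s))

/-- A fusion category of type `(1, m; α, n)`: `m` invertible simples, `n`
simples of FP dimension `α > 1`, and no others. -/
def OfType₂ (C : FusionData) (α : ℝ) (m n : ℕ) : Prop :=
  1 < α ∧ (∀ i : C.I, C.dim i = 1 ∨ C.dim i = α) ∧
    Nat.card {i : C.I // C.dim i = 1} = m ∧ Nat.card {i : C.I // C.dim i = α} = n

/-- An Ising category: three simples `1, g, X` with `g` invertible, `g ≠ 1`,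
`FPdim X = √2` and `X ⊗ X ≅ 1 ⊕ g`. -/
def IsIsing (C : FusionData) : Prop :=
  C.n = 3 ∧ ¬ C.Pointed ∧ C.FPdim = 4 ∧
    ∃ g X : C.I, g ≠ C.one ∧ C.dim g = 1 ∧ C.dim X = Real.sqrt 2 ∧ C.dual X = X ∧
      C.N X X C.one = 1 ∧ C.N X X g = 1 ∧ ∀ k, 0 < C.N X X k → k = C.one ∨ k = g

/-- Modularity at the Grothendieck-ring level: braided together with a
symmetric nondegenerate S-matrix satisfying the Verlinde relations and
normalized by FP dimensions on the row of the unit. -/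
def Modular (C : FusionData) : Prop :=
  C.Braided ∧
    ∃ s : Matrix C.I C.I ℂ,
      (∀ i j, s i j = s j i) ∧
      (∀ i, s C.one i = (C.dim i : ℂ)) ∧
      (∀ i j k, s i j * s i k = (C.dim i : ℂ) * ∑ l, (C.N j k l : ℂ) * s i l) ∧
      IsUnit s

/-- A ring-level Morita context between two fusion categories: a based
`(C, D)`-bimodule with commuting indecomposable actions and equal global
FP dimensions. -/
structure MoritaContext (C D : FusionData) where
  m : ℕ
  actL : C.I → Fin m → Fin m → ℕ
  actR : D.I → Fin m → Fin m → ℕ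
  actL_one : ∀ x y, actL C.one x y = if y = x then 1 else 0
  actR_one : ∀ x y, actR D.one x y = if y = x then 1 else 0
  actL_assoc : ∀ i j x z, (∑ k, C.N i j k * actL k x z) = ∑ y, actL j x y * actL i y z
  actR_assoc : ∀ i j x z, (∑ k, D.N i j k * actR k x z) = ∑ y, actR i x y * actR j y z
  commute : ∀ i j x z, (∑ y, actL i x y * actR j y z) = ∑ y, actR j x y * actL i y z
  indecL : ∀ x y, ∃ i, 0 < actL i x y
  indecR : ∀ x y, ∃ j, 0 < actR j x y
  fpdim_eq : C.FPdim = D.FPdim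

/-- (Categorical) Morita equivalence, encoded at the ring level. -/
def MoritaEquiv (C D : FusionData) : Prop := Nonempty (MoritaContext C D)

/-- Group-theoretical: Morita equivalent to a pointed fusion category. -/
def GroupTheoretical (C : FusionData) : Prop :=
  ∃ D : FusionData, D.Pointed ∧ MoritaEquiv C D

end FusionData

namespace GTYAux

open FusionData Finset

variable (C : FusionData)

lemma dim_pos (i : C.I) : 0 < C.dim i := lt_of_lt_of_le one_pos (C.dim_ge_one i)

lemma dual_inj : Function.Injective C.dual := fun a b h => by
  rw [← C.dual_dual a, h, C.dual_dual]

/-- Frobenius-type reciprocity derived from associativity and `N_dual`. -/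
lemma recip (h x y : C.I) : C.N h x y = C.N x (C.dual y) (C.dual h) := by
  have ha := C.N_assoc h x (C.dual y) C.one
  have e1 : ∀ m : C.I, C.N m (C.dual y) C.one = if m = y then 1 else 0 := by
    intro m
    rw [C.N_dual]
    by_cases hm : m = y
    · simp [hm]
    · rw [if_neg fun hd => hm (dual_inj C hd.symm), if_neg hm]
  have e2 : ∀ m : C.I, C.N h m C.one = if m = C.dual h then 1 else 0 := by
    intro m; rw [C.N_dual]
  simp only [e1, e2, mul_ite, mul_one, mul_zero, Finset.sum_ite_eq',
    Finset.mem_univ, if_true] at ha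
  exact ha

lemma sum_dim (g X : C.I) (hg : C.dim g = 1) :
    ∑ k, (C.N g X k : ℝ) * C.dim k = C.dim X := by
  rw [← C.dim_mul, hg, one_mul]

variable {C}

lemma mulDual {g : C.I} (hg : C.dim g = 1) (m : C.I) :
    C.N g (C.dual g) m = if m = C.one then 1 else 0 := by
  have hsum : ∑ m, (C.N g (C.dual g) m : ℝ) * C.dim m = 1 := by
    rw [← C.dim_mul, C.dim_dual, hg, one_mul]
  have hone : C.N g (C.dual g) C.one = 1 := by simp [C.N_dual]
  have hsplit := Finset.add_sum_erase Finset.univ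
    (fun m => (C.N g (C.dual g) m : ℝ) * C.dim m) (Finset.mem_univ C.one)
  rw [hsum] at hsplit
  have hezero : ∑ m ∈ Finset.univ.erase C.one,
      (C.N g (C.dual g) m : ℝ) * C.dim m = 0 := by
    rw [hone, C.dim_one] at hsplit
    push_cast at hsplit ⊢
    linarith
  by_cases hm : m = C.one
  · simp [hm, hone]
  · rw [if_neg hm]
    have := (Finset.sum_eq_zero_iff_of_nonneg
      (fun i _ => mul_nonneg (Nat.cast_nonneg _) (dim_pos C i).le)).1 hezero
      m (Finset.mem_erase.2 ⟨hm, Finset.mem_univ m⟩)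
    have hd := dim_pos C m
    have : (C.N g (C.dual g) m : ℝ) = 0 := by
      rcases mul_eq_zero.1 this with h | h
      · exact h
      · exact absurd h (ne_of_gt hd)
    exact_mod_cast this

lemma star_id {g : C.I} (hg : C.dim g = 1) (X l : C.I) :
    ∑ m, C.N (C.dual g) X m * C.N g m l = if l = X then 1 else 0 := by
  have ha := C.N_assoc g (C.dual g) X l
  simp only [mulDual hg, ite_mul, one_mul, zero_mul, Finset.sum_ite_eq,
    Finset.sum_ite_eq', Finset.mem_univ, if_true, C.N_one_left] at ha
  exact ha.symm

lemma star_id' {g : C.I} (hg : C.dim g = 1) (X l : C.I) :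
    ∑ m, C.N g X m * C.N (C.dual g) m l = if l = X then 1 else 0 := by
  have hgd : C.dim (C.dual g) = 1 := by rw [C.dim_dual]; exact hg
  have := star_id hgd X l
  rwa [C.dual_dual] at this

lemma exists_pos {g : C.I} (hg : C.dim g = 1) (X : C.I) :
    ∃ Y, 0 < C.N g X Y := by
  have h := star_id' hg X X
  rw [if_pos rfl] at h
  by_contra h0
  push_neg at h0
  have : ∑ m, C.N g X m * C.N (C.dual g) m X = 0 :=
    Finset.sum_eq_zero fun m _ => by
      have h1 := h0 m
      have h2 : C.N g X m = 0 := by omega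
      rw [h2, zero_mul]
  omega

lemma term_le {g : C.I} (hg : C.dim g = 1) (X Y : C.I) :
    (C.N g X Y : ℝ) * C.dim Y ≤ C.dim X := by
  rw [← sum_dim C g X hg]
  exact Finset.single_le_sum (f := fun k => (C.N g X k : ℝ) * C.dim k)
    (fun i _ => mul_nonneg (Nat.cast_nonneg _) (dim_pos C i).le) (Finset.mem_univ Y)

lemma flip {g X Y : C.I} (hg : C.dim g = 1) (hXY : 0 < C.N g X Y) :
    0 < C.N (C.dual g) Y X := by
  have h1 := star_id hg Y Y
  rw [if_pos rfl] at h1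
  obtain ⟨m₀, -, hm⟩ : ∃ m ∈ Finset.univ, 0 < C.N (C.dual g) Y m * C.N g m Y := by
    by_contra h0
    push_neg at h0
    have : ∑ m, C.N (C.dual g) Y m * C.N g m Y = 0 :=
      Finset.sum_eq_zero fun m hm => by have := h0 m hm; omega
    omega
  have hm1 : 0 < C.N (C.dual g) Y m₀ := Nat.pos_of_mul_pos_left
    (by rwa [mul_comm] at hm)
  have hm0X : m₀ = X := by
    have h2 := star_id' hg X m₀
    have hterm : 0 < C.N g X Y * C.N (C.dual g) Y m₀ := mul_pos hXY hm1
    have hsum : 0 < ∑ m, C.N g X m * C.N (C.dual g) m m₀ :=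
      lt_of_lt_of_le hterm (Finset.single_le_sum
        (f := fun m => C.N g X m * C.N (C.dual g) m m₀)
        (fun i _ => Nat.zero_le _) (Finset.mem_univ Y))
    rw [h2] at hsum
    by_contra hne
    rw [if_neg hne] at hsum
    omega
  rwa [hm0X] at hm1

lemma dim_le_of_pos {g X Y : C.I} (hg : C.dim g = 1) (h : 0 < C.N g X Y) :
    C.dim Y ≤ C.dim X := by
  have t := term_le hg X Y
  have h1 : (1 : ℝ) ≤ (C.N g X Y : ℝ) := by exact_mod_cast h
  nlinarith [dim_pos C Y]

lemma sig_dim {g X Y : C.I} (hg : C.dim g = 1) (h : 0 < C.N g X Y) :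
    C.dim Y = C.dim X := by
  have hgd : C.dim (C.dual g) = 1 := by rw [C.dim_dual]; exact hg
  exact le_antisymm (dim_le_of_pos hg h) (dim_le_of_pos hgd (flip hg h))

lemma N_le_one {g X Y : C.I} (hg : C.dim g = 1) : C.N g X Y ≤ 1 := by
  rcases Nat.eq_zero_or_pos (C.N g X Y) with h | h
  · omega
  · have t := term_le hg X Y
    rw [sig_dim hg h] at t
    have hd := dim_pos C X
    have : (C.N g X Y : ℝ) ≤ 1 := by nlinarith
    exact_mod_cast this

lemma sig_unique {g X Y Y' : C.I} (hg : C.dim g = 1)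
    (h1 : 0 < C.N g X Y) (h2 : 0 < C.N g X Y') : Y = Y' := by
  by_contra hne
  have hs := sum_dim C g X hg
  have hpair : ∑ k ∈ ({Y, Y'} : Finset C.I), (C.N g X k : ℝ) * C.dim k ≤ C.dim X := by
    rw [← hs]
    exact Finset.sum_le_sum_of_subset_of_nonneg (Finset.subset_univ _)
      (fun i _ _ => mul_nonneg (Nat.cast_nonneg _) (dim_pos C i).le)
  rw [Finset.sum_pair hne] at hpair
  rw [sig_dim hg h1, sig_dim hg h2] at hpair
  have e1 : (1 : ℝ) ≤ (C.N g X Y : ℝ) := by exact_mod_cast h1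
  have e2 : (1 : ℝ) ≤ (C.N g X Y' : ℝ) := by exact_mod_cast h2
  nlinarith [dim_pos C X]

lemma comp {g h k X Y Z : C.I} (hg : C.dim g = 1)
    (hk : 0 < C.N g h k) (h1 : 0 < C.N h X Y) (h2 : 0 < C.N g Y Z) :
    0 < C.N k X Z := by
  have ha := C.N_assoc g h X Z
  have hrhs : 0 < ∑ m, C.N h X m * C.N g m Z :=
    lt_of_lt_of_le (mul_pos h1 h2) (Finset.single_le_sum
      (f := fun m => C.N h X m * C.N g m Z)
      (fun i _ => Nat.zero_le _) (Finset.mem_univ Y))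
  rw [← ha] at hrhs
  obtain ⟨m, -, hm⟩ : ∃ m ∈ Finset.univ, 0 < C.N g h m * C.N m X Z := by
    by_contra h0
    push_neg at h0
    have : ∑ m, C.N g h m * C.N m X Z = 0 :=
      Finset.sum_eq_zero fun m hm => by have := h0 m hm; omega
    omega
  have hm1 : 0 < C.N g h m := Nat.pos_of_mul_pos_left (by rwa [mul_comm] at hm)
  have hm2 : 0 < C.N m X Z := Nat.pos_of_mul_pos_left hm
  rwa [sig_unique hg hk hm1]

lemma transitive (hTY : C.GeneralizedTY) {X Y : C.I}
    (hX : C.dim X ≠ 1) (hY : C.dim Y ≠ 1) :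
    ∃ g, C.dim g = 1 ∧ 0 < C.N g X Y := by
  have hYd : C.dim (C.dual Y) ≠ 1 := by rw [C.dim_dual]; exact hY
  obtain ⟨k, hk⟩ : ∃ k, 0 < C.N X (C.dual Y) k := by
    by_contra h0
    push_neg at h0
    have hs : ∑ k, (C.N X (C.dual Y) k : ℝ) * C.dim k = 0 :=
      Finset.sum_eq_zero fun m _ => by
        have := h0 m
        have : C.N X (C.dual Y) m = 0 := by omega
        simp [this]
    have := C.dim_mul X (C.dual Y)
    rw [hs] at this
    nlinarith [dim_pos C X, dim_pos C (C.dual Y)]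
  have hk1 : C.dim k = 1 := hTY.2 X (C.dual Y) hX hYd k hk
  refine ⟨C.dual k, by rw [C.dim_dual]; exact hk1, ?_⟩
  rw [recip C (C.dual k) X Y, C.dual_dual]
  exact hk

/-- The unique simple appearing in `g ⊗ X` when `g` is invertible. -/
noncomputable def sig (C : FusionData) (g X : C.I) : C.I :=
  if h : ∃ Y, 0 < C.N g X Y then h.choose else X

lemma sig_pos {g : C.I} (hg : C.dim g = 1) (X : C.I) :
    0 < C.N g X (sig C g X) := by
  have h : ∃ Y, 0 < C.N g X Y := exists_pos hg X
  rw [sig, dif_pos h]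
  exact h.choose_spec

lemma sig_eq {g X Y : C.I} (hg : C.dim g = 1) (h : 0 < C.N g X Y) :
    sig C g X = Y :=
  sig_unique hg (sig_pos hg X) h

lemma cardN (S : Set C.I) :
    haveI := Classical.dec
    Nat.card S = (Finset.univ.filter fun i : C.I => i ∈ S).card := by
  classical
  have h : S.toFinset = Finset.univ.filter (fun i => i ∈ S) := by
    ext i; simp
  rw [← h, ← Set.ncard_eq_toFinset_card', ← Nat.card_coe_set_eq]

/-- Key dimension computation: `dim X ^ 2 = |N|` for `X` non-invertible. -/
lemma dimsq (hTY : C.GeneralizedTY) (Nsub : C.Sub)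
    (hNptd : ∀ i ∈ Nsub.carrier, C.dim i = 1)
    (hstab : ∀ X : C.I, C.dim X ≠ 1 →
      ∀ g : C.I, C.dim g = 1 → (0 < C.N g X X ↔ g ∈ Nsub.carrier))
    {X : C.I} (hX : C.dim X ≠ 1) :
    C.dim X ^ 2 = (Nat.card Nsub.carrier : ℝ) := by
  classical
  have hXd : C.dim (C.dual X) ≠ 1 := by rw [C.dim_dual]; exact hX
  have h1 : C.dim X ^ 2 = ∑ k, (C.N X (C.dual X) k : ℝ) * C.dim k := by
    rw [← C.dim_mul, C.dim_dual, pow_two]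
  have h2 : ∀ k, (C.N X (C.dual X) k : ℝ) * C.dim k =
      if C.dual k ∈ Nsub.carrier then 1 else 0 := by
    intro k
    by_cases hk : C.dual k ∈ Nsub.carrier
    · have hdk1 : C.dim (C.dual k) = 1 := hNptd _ hk
      have hk1 : C.dim k = 1 := by rw [← C.dim_dual]; exact hdk1
      have hpos : 0 < C.N (C.dual k) X X := (hstab X hX _ hdk1).2 hk
      have heqN : C.N X (C.dual X) k = C.N (C.dual k) X X := by
        rw [recip C (C.dual k) X X, C.dual_dual]
      have hle : C.N (C.dual k) X X ≤ 1 := N_le_one hdk1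
      have : C.N X (C.dual X) k = 1 := by omega
      rw [if_pos hk, this, hk1]
      norm_num
    · have h0 : C.N X (C.dual X) k = 0 := by
        by_contra hne
        have hpos : 0 < C.N X (C.dual X) k := Nat.pos_of_ne_zero hne
        have hk1 : C.dim k = 1 := hTY.2 X (C.dual X) hX hXd k hpos
        have hdk1 : C.dim (C.dual k) = 1 := by rw [C.dim_dual]; exact hk1
        have : 0 < C.N (C.dual k) X X := by
          rw [recip C (C.dual k) X X, C.dual_dual]
          exact hpos
        exact hk ((hstab X hX _ hdk1).1 this)
      rw [if_neg hk, h0]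
      norm_num
  rw [h1, Finset.sum_congr rfl (fun k _ => h2 k), Finset.sum_boole]
  have hcard : (Finset.univ.filter fun k : C.I => C.dual k ∈ Nsub.carrier).card =
      (Finset.univ.filter fun k : C.I => k ∈ Nsub.carrier).card := by
    refine Finset.card_nbij' C.dual C.dual ?_ ?_ ?_ ?_
    · intro a ha
      simp only [Finset.mem_coe, Finset.mem_filter, Finset.mem_univ, true_and] at ha ⊢
      exact ha
    · intro a ha
      simp only [Finset.mem_coe, Finset.mem_filter, Finset.mem_univ, true_and] at ha ⊢
      rwa [C.dual_dual]
    · intro a _; exact C.dual_dual a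
    · intro a _; exact C.dual_dual a
  rw [hcard, ← cardN Nsub.carrier]

/-- The counting identity `|G| = |M| ⬝ |N|`. -/
lemma card_count (hTY : C.GeneralizedTY) (Nsub : C.Sub)
    (hNptd : ∀ i ∈ Nsub.carrier, C.dim i = 1)
    (hstab : ∀ X : C.I, C.dim X ≠ 1 →
      ∀ g : C.I, C.dim g = 1 → (0 < C.N g X X ↔ g ∈ Nsub.carrier)) :
    haveI := Classical.dec
    (Finset.univ.filter fun i : C.I => C.dim i = 1).card =
      (Finset.univ.filter fun i : C.I => C.dim i ≠ 1).card * Nat.card Nsub.carrier := by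
  classical
  obtain ⟨X₀, hX₀⟩ : ∃ i : C.I, C.dim i ≠ 1 := by
    by_contra h0
    push_neg at h0
    exact hTY.1 h0
  set G := Finset.univ.filter fun i : C.I => C.dim i = 1 with hG
  set M := Finset.univ.filter fun i : C.I => C.dim i ≠ 1 with hM
  have hmaps : ∀ g ∈ G, sig C g X₀ ∈ M := by
    intro g hg
    rw [hG, Finset.mem_filter] at hg
    rw [hM, Finset.mem_filter]
    refine ⟨Finset.mem_univ _, ?_⟩
    rw [sig_dim hg.2 (sig_pos hg.2 X₀)]
    exact hX₀
  rw [Finset.card_eq_sum_card_fiberwise hmaps]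
  have hfib : ∀ Y ∈ M, (G.filter fun g => sig C g X₀ = Y).card = Nat.card Nsub.carrier := by
    intro Y hY
    rw [hM, Finset.mem_filter] at hY
    obtain ⟨g₀, hg₀, hN0⟩ := transitive hTY hX₀ hY.2
    have hg₀d : C.dim (C.dual g₀) = 1 := by rw [C.dim_dual]; exact hg₀
    rw [cardN Nsub.carrier]
    symm
    refine Finset.card_nbij' (fun n => sig C g₀ n) (fun g => sig C (C.dual g₀) g)
      ?_ ?_ ?_ ?_
    · -- N → fiber
      intro n hnmem
      simp only [Finset.mem_coe, Finset.mem_filter, Finset.mem_univ, true_and] at hnmem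
      have hn1 : C.dim n = 1 := hNptd _ hnmem
      have hgk : 0 < C.N g₀ n (sig C g₀ n) := sig_pos hg₀ n
      have hk1 : C.dim (sig C g₀ n) = 1 := by rw [sig_dim hg₀ hgk]; exact hn1
      have hnfix : 0 < C.N n X₀ X₀ := (hstab X₀ hX₀ n hn1).2 hnmem
      have hkY : 0 < C.N (sig C g₀ n) X₀ Y := comp hg₀ hgk hnfix hN0
      refine Finset.mem_filter.2 ⟨?_, sig_eq hk1 hkY⟩
      rw [hG]
      exact Finset.mem_filter.2 ⟨Finset.mem_univ _, hk1⟩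
    · -- fiber → N
      intro g hgmem
      rw [Finset.mem_coe, Finset.mem_filter, hG, Finset.mem_filter] at hgmem
      obtain ⟨⟨-, hg1⟩, hgf⟩ := hgmem
      have hgn : 0 < C.N (C.dual g₀) g (sig C (C.dual g₀) g) := sig_pos hg₀d g
      have hn1 : C.dim (sig C (C.dual g₀) g) = 1 := by
        rw [sig_dim hg₀d hgn]; exact hg1
      have hgX₀Y : 0 < C.N g X₀ Y := by
        have := sig_pos hg1 X₀
        rwa [hgf] at this
      have hflip : 0 < C.N (C.dual g₀) Y X₀ := flip hg₀ hN0
      have hnX₀ : 0 < C.N (sig C (C.dual g₀) g) X₀ X₀ := comp hg₀d hgn hgX₀Y hflip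
      simp only [Finset.mem_coe, Finset.mem_filter, Finset.mem_univ, true_and]
      exact (hstab X₀ hX₀ _ hn1).1 hnX₀
    · -- left inverse on N
      intro n _
      have hgk : 0 < C.N g₀ n (sig C g₀ n) := sig_pos hg₀ n
      exact sig_eq hg₀d (flip hg₀ hgk)
    · -- right inverse on fiber
      intro g hgmem
      rw [Finset.mem_coe, Finset.mem_filter, hG, Finset.mem_filter] at hgmem
      have hgn : 0 < C.N (C.dual g₀) g (sig C (C.dual g₀) g) := sig_pos hg₀d g
      have := flip hg₀d hgn
      rw [C.dual_dual] at this
      exact sig_eq hg₀ this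
  rw [Finset.sum_congr rfl hfib, Finset.sum_const, smul_eq_mul, hM]
  congr!

end GTYAux

open FusionData in
/-- In a generalized Tambara–Yamagami category with common
stabilizer `N ≤ G(C)` of the non-invertible simples, every non-invertible
simple has FP dimension `√|N|`, the rank is `[G(C):N]·(1+|N|)` and
`FPdim C = 2·|G(C)|`. -/
theorem generalizedTY_structure
    (C : FusionData) (hTY : C.GeneralizedTY)
    (Nsub : C.Sub) (hNptd : ∀ i ∈ Nsub.carrier, C.dim i = 1)
    (hstab : ∀ X : C.I, C.dim X ≠ 1 →
      ∀ g : C.I, C.dim g = 1 → (0 < C.N g X X ↔ g ∈ Nsub.carrier)) :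
    (∀ X : C.I, C.dim X ≠ 1 → C.dim X = Real.sqrt (Nat.card Nsub.carrier)) ∧
    (∃ idx : ℕ, C.numInv = idx * Nat.card Nsub.carrier ∧
      C.n = idx * (1 + Nat.card Nsub.carrier)) ∧
    C.FPdim = 2 * C.numInv := by
  classical
  have hdim : ∀ X : C.I, C.dim X ≠ 1 → C.dim X = Real.sqrt (Nat.card Nsub.carrier) := by
    intro X hX
    have h := GTYAux.dimsq hTY Nsub hNptd hstab hX
    rw [← h, Real.sqrt_sq (le_of_lt (GTYAux.dim_pos C X))]
  have hcount : (Finset.univ.filter fun i : C.I => C.dim i = 1).card =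
      (Finset.univ.filter fun i : C.I => C.dim i ≠ 1).card * Nat.card Nsub.carrier := by
    have h := GTYAux.card_count hTY Nsub hNptd hstab
    convert h using 3
    congr!
  have hGcard : C.numInv = (Finset.univ.filter fun i : C.I => C.dim i = 1).card := by
    rw [FusionData.numInv]
  have htot : (Finset.univ.filter fun i : C.I => C.dim i = 1).card +
      (Finset.univ.filter fun i : C.I => C.dim i ≠ 1).card = C.n := by
    have h := Finset.card_filter_add_card_filter_not
      (s := (Finset.univ : Finset C.I)) (p := fun i : C.I => C.dim i = 1)
    simpa [Finset.card_univ] using h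
  refine ⟨hdim, ⟨(Finset.univ.filter fun i : C.I => C.dim i ≠ 1).card, ?_, ?_⟩, ?_⟩
  · rw [hGcard]
    exact hcount
  · rw [Nat.mul_add, mul_one, ← hcount]
    omega
  · have hsplit : C.FPdim =
        (∑ i ∈ Finset.univ.filter (fun i : C.I => C.dim i = 1), C.dim i ^ 2) +
        ∑ i ∈ Finset.univ.filter (fun i : C.I => ¬ C.dim i = 1), C.dim i ^ 2 := by
      rw [FusionData.FPdim,
        ← Finset.sum_filter_add_sum_filter_not Finset.univ (fun i : C.I => C.dim i = 1)]
    have h1 : (∑ i ∈ Finset.univ.filter (fun i : C.I => C.dim i = 1), C.dim i ^ 2) =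
        ((Finset.univ.filter fun i : C.I => C.dim i = 1).card : ℝ) := by
      rw [Finset.sum_congr rfl (fun i hi => by
        rw [(Finset.mem_filter.1 hi).2, one_pow]), Finset.sum_const, nsmul_eq_mul, mul_one]
    have h2 : (∑ i ∈ Finset.univ.filter (fun i : C.I => ¬ C.dim i = 1), C.dim i ^ 2) =
        ((Finset.univ.filter fun i : C.I => C.dim i ≠ 1).card : ℝ) *
          (Nat.card Nsub.carrier : ℝ) := by
      rw [Finset.sum_congr rfl (fun i hi =>
        GTYAux.dimsq hTY Nsub hNptd hstab (Finset.mem_filter.1 hi).2),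
        Finset.sum_const, nsmul_eq_mul]
    rw [hsplit, h1, h2, hGcard]
    push_cast [hcount]
    ring
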